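/- f_∞(W_4) = 3, where W_4 is the wheel on 5 vertices: every distance function on W_4 can be realized in ℓ_∞³ (indeed W_4 has a vertex cover of size 3), but there exists a distance function on W_4 not realizable in ℓ_∞². -/

import Mathlib

set_option maxHeartbeats 1600000

/-- `d` is a distance function on the graph `G`. -/
def IsDistFn {V : Type*} (G : SimpleGraph V) (d : V → V → ℝ) : Prop :=
  (∀ x y, d x y = d y x) ∧ (∀ x y, G.Adj x y → 0 ≤ d x y) ∧
  (∀ x y, G.Adj x y → ∀ p : G.Walk x y,
    d x y ≤ (p.darts.map fun e => d e.toProd.1 e.toProd.2).sum)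

/-- `f_∞(G)`: the least `k` such that every distance function on `G` admits a
realization in `ℓ_∞^k`. -/
noncomputable def finfty {V : Type*} [Fintype V] (G : SimpleGraph V) : ℕ :=
  sInf {k : ℕ | ∀ d : V → V → ℝ, IsDistFn G d →
    ∃ q : V → Fin k → ℝ, ∀ x y, G.Adj x y → ‖q x - q y‖ = d x y}

/-- The wheel `W_4` on 5 vertices: the 4-cycle `0-1-2-3` plus the hub `4`. -/
def W4 : SimpleGraph (Fin 5) :=
  SimpleGraph.fromEdgeSet
    {s(0, 1), s(1, 2), s(2, 3), s(3, 0), s(0, 4), s(1, 4), s(2, 4), s(3, 4)}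

lemma pinorm_eq {n : ℕ} (f : Fin n → ℝ) (c : ℝ) (hc : 0 ≤ c) (hle : ∀ i, |f i| ≤ c)
    (i₀ : Fin n) (heq : |f i₀| = c) : ‖f‖ = c :=
  le_antisymm ((pi_norm_le_iff_of_nonneg hc).2 (by simpa using hle))
    (heq ▸ (by simpa using norm_le_pi_norm f i₀))

lemma pinorm2 (f : Fin 2 → ℝ) : ‖f‖ = max |f 0| |f 1| := by
  apply le_antisymm
  · apply (pi_norm_le_iff_of_nonneg (le_trans (abs_nonneg _) (le_max_left _ _))).2
    intro i
    fin_cases i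
    · exact le_max_left _ _
    · exact le_max_right _ _
  · exact max_le (by simpa using norm_le_pi_norm f 0) (by simpa using norm_le_pi_norm f 1)

lemma pinorm1 (f : Fin 1 → ℝ) : ‖f‖ = |f 0| := by
  apply le_antisymm
  · apply (pi_norm_le_iff_of_nonneg (abs_nonneg _)).2
    intro i
    fin_cases i
    exact le_refl _
  · simpa using norm_le_pi_norm f 0

lemma keyid (x y : ℝ) : |x + y| + |x - y| = 2 * max |x| |y| := by
  rcases abs_cases x with ⟨hx, hx'⟩ | ⟨hx, hx'⟩ <;>
    rcases abs_cases y with ⟨hy, hy'⟩ | ⟨hy, hy'⟩ <;>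
    rcases abs_cases (x + y) with ⟨h1, h1'⟩ | ⟨h1, h1'⟩ <;>
    rcases abs_cases (x - y) with ⟨h2, h2'⟩ | ⟨h2, h2'⟩ <;>
    rcases max_cases |x| |y| with ⟨h3, h3'⟩ | ⟨h3, h3'⟩ <;>
    linarith

def Dmat : Fin 5 → Fin 5 → ℕ :=
  ![![0,18,35,24,200], ![18,0,17,37,200], ![35,17,0,20,200], ![24,37,20,0,200],
    ![200,200,200,200,0]]

lemma Dmat_symm : ∀ x y, Dmat x y = Dmat y x := by decide
lemma Dmat_tri : ∀ x y z, Dmat x z ≤ Dmat x y + Dmat y z := by decide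
lemma Dmat_diag : ∀ x, Dmat x x = 0 := by decide

noncomputable def dC : Fin 5 → Fin 5 → ℝ := fun i j => ((Dmat i j : ℕ) : ℝ)

lemma walk_bound : ∀ (x y : Fin 5) (p : W4.Walk x y),
    dC x y ≤ (p.darts.map fun e => dC e.toProd.1 e.toProd.2).sum := by
  intro x y p
  induction p with
  | nil => simp [dC, Dmat_diag]
  | @cons u v w h p ih =>
    simp only [SimpleGraph.Walk.darts_cons, List.map_cons, List.sum_cons]
    have t' : dC u w ≤ dC u v + dC v w := by
      have := Dmat_tri u v w
      unfold dC
      exact_mod_cast this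
    linarith

lemma dC_distfn : IsDistFn W4 dC :=
  ⟨fun x y => by unfold dC; exact_mod_cast Dmat_symm x y,
   fun x y _ => Nat.cast_nonneg _,
   fun x y _ p => walk_bound x y p⟩

lemma eSS (s t c : ℝ) (hs : 0 ≤ s) (ht : 0 ≤ t) (h : |s - t| + |abs s - abs t| = 2 * c) :
    s - t = c ∨ t - s = c := by
  rw [abs_of_nonneg hs, abs_of_nonneg ht] at h
  rcases abs_cases (s - t) with ⟨h1, _⟩ | ⟨h1, _⟩ <;> rw [h1] at h
  · left; linarith
  · right; linarith

lemma eNN (s t c : ℝ) (hs : s ≤ 0) (ht : t ≤ 0) (h : |s - t| + |abs s - abs t| = 2 * c) :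
    s - t = c ∨ t - s = c := by
  rw [abs_of_nonpos hs, abs_of_nonpos ht, show -s - -t = -(s - t) from by ring, abs_neg] at h
  rcases abs_cases (s - t) with ⟨h1, _⟩ | ⟨h1, _⟩ <;> rw [h1] at h
  · left; linarith
  · right; linarith

lemma eSN (s t c : ℝ) (hs : 0 ≤ s) (ht : t ≤ 0) (h : |s - t| + |abs s - abs t| = 2 * c) :
    (s = c ∧ -t ≤ c) ∨ (-t = c ∧ s ≤ c) := by
  rw [abs_of_nonneg hs, abs_of_nonpos ht, show s - -t = s + t from by ring,
    abs_of_nonneg (by linarith : (0:ℝ) ≤ s - t)] at h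
  rcases abs_cases (s + t) with ⟨h1, h2⟩ | ⟨h1, h2⟩ <;> rw [h1] at h
  · left; exact ⟨by linarith, by linarith⟩
  · right; exact ⟨by linarith, by linarith⟩

lemma eNS (s t c : ℝ) (hs : s ≤ 0) (ht : 0 ≤ t) (h : |s - t| + |abs s - abs t| = 2 * c) :
    (-s = c ∧ t ≤ c) ∨ (t = c ∧ -s ≤ c) := by
  rw [abs_of_nonpos hs, abs_of_nonneg ht, show -s - t = -(s + t) from by ring, abs_neg,
    abs_of_nonpos (by linarith : s - t ≤ (0:ℝ))] at h
  rcases abs_cases (s + t) with ⟨h1, h2⟩ | ⟨h1, h2⟩ <;> rw [h1] at h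
  · right; exact ⟨by linarith, by linarith⟩
  · left; exact ⟨by linarith, by linarith⟩

lemma noSol (u0 u1 u2 u3 : ℝ)
    (f1 : |u0 - u1| + |abs u0 - abs u1| = 2 * 18)
    (f2 : |u1 - u2| + |abs u1 - abs u2| = 2 * 17)
    (f3 : |u2 - u3| + |abs u2 - abs u3| = 2 * 20)
    (f4 : |u3 - u0| + |abs u3 - abs u0| = 2 * 24) : False := by
  rcases le_total 0 u0 with s0 | s0 <;> rcases le_total 0 u1 with s1 | s1 <;>
    rcases le_total 0 u2 with s2 | s2 <;> rcases le_total 0 u3 with s3 | s3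
  · rcases eSS u0 u1 18 s0 s1 f1 with h0|h0 <;>
      rcases eSS u1 u2 17 s1 s2 f2 with h1|h1 <;>
      rcases eSS u2 u3 20 s2 s3 f3 with h2|h2 <;>
      rcases eSS u3 u0 24 s3 s0 f4 with h3|h3 <;>
      linarith
  · rcases eSS u0 u1 18 s0 s1 f1 with h0|h0 <;>
      rcases eSS u1 u2 17 s1 s2 f2 with h1|h1 <;>
      rcases eSN u2 u3 20 s2 s3 f3 with ⟨h2,h2'⟩|⟨h2,h2'⟩ <;>
      rcases eNS u3 u0 24 s3 s0 f4 with ⟨h3,h3'⟩|⟨h3,h3'⟩ <;>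
      linarith
  · rcases eSS u0 u1 18 s0 s1 f1 with h0|h0 <;>
      rcases eSN u1 u2 17 s1 s2 f2 with ⟨h1,h1'⟩|⟨h1,h1'⟩ <;>
      rcases eNS u2 u3 20 s2 s3 f3 with ⟨h2,h2'⟩|⟨h2,h2'⟩ <;>
      rcases eSS u3 u0 24 s3 s0 f4 with h3|h3 <;>
      linarith
  · rcases eSS u0 u1 18 s0 s1 f1 with h0|h0 <;>
      rcases eSN u1 u2 17 s1 s2 f2 with ⟨h1,h1'⟩|⟨h1,h1'⟩ <;>
      rcases eNN u2 u3 20 s2 s3 f3 with h2|h2 <;>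
      rcases eNS u3 u0 24 s3 s0 f4 with ⟨h3,h3'⟩|⟨h3,h3'⟩ <;>
      linarith
  · rcases eSN u0 u1 18 s0 s1 f1 with ⟨h0,h0'⟩|⟨h0,h0'⟩ <;>
      rcases eNS u1 u2 17 s1 s2 f2 with ⟨h1,h1'⟩|⟨h1,h1'⟩ <;>
      rcases eSS u2 u3 20 s2 s3 f3 with h2|h2 <;>
      rcases eSS u3 u0 24 s3 s0 f4 with h3|h3 <;>
      linarith
  · rcases eSN u0 u1 18 s0 s1 f1 with ⟨h0,h0'⟩|⟨h0,h0'⟩ <;>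
      rcases eNS u1 u2 17 s1 s2 f2 with ⟨h1,h1'⟩|⟨h1,h1'⟩ <;>
      rcases eSN u2 u3 20 s2 s3 f3 with ⟨h2,h2'⟩|⟨h2,h2'⟩ <;>
      rcases eNS u3 u0 24 s3 s0 f4 with ⟨h3,h3'⟩|⟨h3,h3'⟩ <;>
      linarith
  · rcases eSN u0 u1 18 s0 s1 f1 with ⟨h0,h0'⟩|⟨h0,h0'⟩ <;>
      rcases eNN u1 u2 17 s1 s2 f2 with h1|h1 <;>
      rcases eNS u2 u3 20 s2 s3 f3 with ⟨h2,h2'⟩|⟨h2,h2'⟩ <;>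
      rcases eSS u3 u0 24 s3 s0 f4 with h3|h3 <;>
      linarith
  · rcases eSN u0 u1 18 s0 s1 f1 with ⟨h0,h0'⟩|⟨h0,h0'⟩ <;>
      rcases eNN u1 u2 17 s1 s2 f2 with h1|h1 <;>
      rcases eNN u2 u3 20 s2 s3 f3 with h2|h2 <;>
      rcases eNS u3 u0 24 s3 s0 f4 with ⟨h3,h3'⟩|⟨h3,h3'⟩ <;>
      linarith
  · rcases eNS u0 u1 18 s0 s1 f1 with ⟨h0,h0'⟩|⟨h0,h0'⟩ <;>
      rcases eSS u1 u2 17 s1 s2 f2 with h1|h1 <;>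
      rcases eSS u2 u3 20 s2 s3 f3 with h2|h2 <;>
      rcases eSN u3 u0 24 s3 s0 f4 with ⟨h3,h3'⟩|⟨h3,h3'⟩ <;>
      linarith
  · rcases eNS u0 u1 18 s0 s1 f1 with ⟨h0,h0'⟩|⟨h0,h0'⟩ <;>
      rcases eSS u1 u2 17 s1 s2 f2 with h1|h1 <;>
      rcases eSN u2 u3 20 s2 s3 f3 with ⟨h2,h2'⟩|⟨h2,h2'⟩ <;>
      rcases eNN u3 u0 24 s3 s0 f4 with h3|h3 <;>
      linarith
  · rcases eNS u0 u1 18 s0 s1 f1 with ⟨h0,h0'⟩|⟨h0,h0'⟩ <;>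
      rcases eSN u1 u2 17 s1 s2 f2 with ⟨h1,h1'⟩|⟨h1,h1'⟩ <;>
      rcases eNS u2 u3 20 s2 s3 f3 with ⟨h2,h2'⟩|⟨h2,h2'⟩ <;>
      rcases eSN u3 u0 24 s3 s0 f4 with ⟨h3,h3'⟩|⟨h3,h3'⟩ <;>
      linarith
  · rcases eNS u0 u1 18 s0 s1 f1 with ⟨h0,h0'⟩|⟨h0,h0'⟩ <;>
      rcases eSN u1 u2 17 s1 s2 f2 with ⟨h1,h1'⟩|⟨h1,h1'⟩ <;>
      rcases eNN u2 u3 20 s2 s3 f3 with h2|h2 <;>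
      rcases eNN u3 u0 24 s3 s0 f4 with h3|h3 <;>
      linarith
  · rcases eNN u0 u1 18 s0 s1 f1 with h0|h0 <;>
      rcases eNS u1 u2 17 s1 s2 f2 with ⟨h1,h1'⟩|⟨h1,h1'⟩ <;>
      rcases eSS u2 u3 20 s2 s3 f3 with h2|h2 <;>
      rcases eSN u3 u0 24 s3 s0 f4 with ⟨h3,h3'⟩|⟨h3,h3'⟩ <;>
      linarith
  · rcases eNN u0 u1 18 s0 s1 f1 with h0|h0 <;>
      rcases eNS u1 u2 17 s1 s2 f2 with ⟨h1,h1'⟩|⟨h1,h1'⟩ <;>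
      rcases eSN u2 u3 20 s2 s3 f3 with ⟨h2,h2'⟩|⟨h2,h2'⟩ <;>
      rcases eNN u3 u0 24 s3 s0 f4 with h3|h3 <;>
      linarith
  · rcases eNN u0 u1 18 s0 s1 f1 with h0|h0 <;>
      rcases eNN u1 u2 17 s1 s2 f2 with h1|h1 <;>
      rcases eNS u2 u3 20 s2 s3 f3 with ⟨h2,h2'⟩|⟨h2,h2'⟩ <;>
      rcases eSN u3 u0 24 s3 s0 f4 with ⟨h3,h3'⟩|⟨h3,h3'⟩ <;>
      linarith
  · rcases eNN u0 u1 18 s0 s1 f1 with h0|h0 <;>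
      rcases eNN u1 u2 17 s1 s2 f2 with h1|h1 <;>
      rcases eNN u2 u3 20 s2 s3 f3 with h2|h2 <;>
      rcases eNN u3 u0 24 s3 s0 f4 with h3|h3 <;>
      linarith

lemma subcore (u0 u1 u2 u3 v0 v1 v2 v3 : ℝ)
    (n0 : |u0| + |v0| = 400) (n1 : |u1| + |v1| = 400)
    (n2 : |u2| + |v2| = 400) (n3 : |u3| + |v3| = 400)
    (e1 : |u0 - u1| + |v0 - v1| = 36) (e2 : |u1 - u2| + |v1 - v2| = 34)
    (e3 : |u2 - u3| + |v2 - v3| = 40) (e4 : |u3 - u0| + |v3 - v0| = 48)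
    (hv : 200 ≤ v0) : False := by
  have b1 := abs_le.1 (show |v0 - v1| ≤ 36 by linarith [abs_nonneg (u0 - u1)])
  have b2 := abs_le.1 (show |v1 - v2| ≤ 34 by linarith [abs_nonneg (u1 - u2)])
  have b4 := abs_le.1 (show |v3 - v0| ≤ 48 by linarith [abs_nonneg (u3 - u0)])
  have r0 : |v0| = v0 := abs_of_nonneg (by linarith)
  have r1 : |v1| = v1 := abs_of_nonneg (by linarith)
  have r2 : |v2| = v2 := abs_of_nonneg (by linarith)
  have r3 : |v3| = v3 := abs_of_nonneg (by linarith)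
  have w0 : |u0| = 400 - v0 := by rw [r0] at n0; linarith
  have w1 : |u1| = 400 - v1 := by rw [r1] at n1; linarith
  have w2 : |u2| = 400 - v2 := by rw [r2] at n2; linarith
  have w3 : |u3| = 400 - v3 := by rw [r3] at n3; linarith
  refine noSol u0 u1 u2 u3 ?_ ?_ ?_ ?_
  · rw [show abs u0 - abs u1 = -(v0 - v1) from by rw [w0, w1]; ring, abs_neg]; linarith
  · rw [show abs u1 - abs u2 = -(v1 - v2) from by rw [w1, w2]; ring, abs_neg]; linarith
  · rw [show abs u2 - abs u3 = -(v2 - v3) from by rw [w2, w3]; ring, abs_neg]; linarith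
  · rw [show abs u3 - abs u0 = -(v3 - v0) from by rw [w3, w0]; ring, abs_neg]; linarith

lemma core (u0 u1 u2 u3 v0 v1 v2 v3 : ℝ)
    (n0 : |u0| + |v0| = 400) (n1 : |u1| + |v1| = 400)
    (n2 : |u2| + |v2| = 400) (n3 : |u3| + |v3| = 400)
    (e1 : |u0 - u1| + |v0 - v1| = 36) (e2 : |u1 - u2| + |v1 - v2| = 34)
    (e3 : |u2 - u3| + |v2 - v3| = 40) (e4 : |u3 - u0| + |v3 - v0| = 48)
    (hv : 200 ≤ |v0|) : False := by
  rcases abs_cases v0 with ⟨hv0, _⟩ | ⟨hv0, _⟩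
  · exact subcore u0 u1 u2 u3 v0 v1 v2 v3 n0 n1 n2 n3 e1 e2 e3 e4 (by linarith)
  · refine subcore u0 u1 u2 u3 (-v0) (-v1) (-v2) (-v3) ?_ ?_ ?_ ?_ ?_ ?_ ?_ ?_ (by linarith)
    · rw [abs_neg]; exact n0
    · rw [abs_neg]; exact n1
    · rw [abs_neg]; exact n2
    · rw [abs_neg]; exact n3
    · rw [show -v0 - -v1 = -(v0 - v1) from by ring, abs_neg]; exact e1
    · rw [show -v1 - -v2 = -(v1 - v2) from by ring, abs_neg]; exact e2
    · rw [show -v2 - -v3 = -(v2 - v3) from by ring, abs_neg]; exact e3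
    · rw [show -v3 - -v0 = -(v3 - v0) from by ring, abs_neg]; exact e4

lemma refute (q : Fin 5 → Fin 2 → ℝ)
    (h01 : ‖q 0 - q 1‖ = 18) (h12 : ‖q 1 - q 2‖ = 17) (h23 : ‖q 2 - q 3‖ = 20)
    (h30 : ‖q 3 - q 0‖ = 24) (h04 : ‖q 0 - q 4‖ = 200) (h14 : ‖q 1 - q 4‖ = 200)
    (h24 : ‖q 2 - q 4‖ = 200) (h34 : ‖q 3 - q 4‖ = 200) : False := by
  have comp : ∀ i j : Fin 5, ∀ k : Fin 2, (q i - q j) k = q i k - q j k := fun _ _ _ => rfl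
  have m : ∀ i : Fin 5, i ≠ 4 → ‖q i - q 4‖ = 200 →
      max |q i 0 - q 4 0| |q i 1 - q 4 1| = 200 := by
    intro i _ h
    rw [← comp i 4 0, ← comp i 4 1, ← pinorm2, h]
  have m0 := m 0 (by decide) h04
  have m1 := m 1 (by decide) h14
  have m2 := m 2 (by decide) h24
  have m3 := m 3 (by decide) h34
  have me : ∀ i j : Fin 5, ∀ c : ℝ, ‖q i - q j‖ = c →
      max |q i 0 - q j 0| |q i 1 - q j 1| = c := by
    intro i j c h
    rw [← comp i j 0, ← comp i j 1, ← pinorm2, h]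
  have me1 := me 0 1 18 h01
  have me2 := me 1 2 17 h12
  have me3 := me 2 3 20 h23
  have me4 := me 3 0 24 h30
  -- u_i, v_i
  have n : ∀ i : Fin 5, max |q i 0 - q 4 0| |q i 1 - q 4 1| = 200 →
      |(q i 0 - q 4 0) + (q i 1 - q 4 1)| + |(q i 0 - q 4 0) - (q i 1 - q 4 1)| = 400 := by
    intro i h
    have k := keyid (q i 0 - q 4 0) (q i 1 - q 4 1)
    rw [h] at k; linarith
  have n0 := n 0 m0; have n1 := n 1 m1; have n2 := n 2 m2; have n3 := n 3 m3
  have e : ∀ i j : Fin 5, ∀ c : ℝ, max |q i 0 - q j 0| |q i 1 - q j 1| = c →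
      |((q i 0 - q 4 0) + (q i 1 - q 4 1)) - ((q j 0 - q 4 0) + (q j 1 - q 4 1))| +
      |((q i 0 - q 4 0) - (q i 1 - q 4 1)) - ((q j 0 - q 4 0) - (q j 1 - q 4 1))| = 2 * c := by
    intro i j c h
    have k := keyid (q i 0 - q j 0) (q i 1 - q j 1)
    rw [h] at k
    rw [show ((q i 0 - q 4 0) + (q i 1 - q 4 1)) - ((q j 0 - q 4 0) + (q j 1 - q 4 1)) =
      (q i 0 - q j 0) + (q i 1 - q j 1) from by ring,
      show ((q i 0 - q 4 0) - (q i 1 - q 4 1)) - ((q j 0 - q 4 0) - (q j 1 - q 4 1)) =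
      (q i 0 - q j 0) - (q i 1 - q j 1) from by ring]
    linarith
  have e1 := e 0 1 18 me1
  have e2 := e 1 2 17 me2
  have e3 := e 2 3 20 me3
  have e4 := e 3 0 24 me4
  set u0 := (q 0 0 - q 4 0) + (q 0 1 - q 4 1)
  set u1 := (q 1 0 - q 4 0) + (q 1 1 - q 4 1)
  set u2 := (q 2 0 - q 4 0) + (q 2 1 - q 4 1)
  set u3 := (q 3 0 - q 4 0) + (q 3 1 - q 4 1)
  set v0 := (q 0 0 - q 4 0) - (q 0 1 - q 4 1)
  set v1 := (q 1 0 - q 4 0) - (q 1 1 - q 4 1)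
  set v2 := (q 2 0 - q 4 0) - (q 2 1 - q 4 1)
  set v3 := (q 3 0 - q 4 0) - (q 3 1 - q 4 1)
  rcases le_total |u0| |v0| with h | h
  · exact core u0 u1 u2 u3 v0 v1 v2 v3 n0 n1 n2 n3
      (by linarith) (by linarith) (by linarith) (by linarith) (by linarith)
  · exact core v0 v1 v2 v3 u0 u1 u2 u3 (by linarith) (by linarith) (by linarith) (by linarith)
      (by linarith) (by linarith) (by linarith) (by linarith) (by linarith)

noncomputable def qfun (d : Fin 5 → Fin 5 → ℝ) : Fin 5 → Fin 3 → ℝ := fun v =>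
  ![ (![0, d 0 1, min (d 0 1 + d 1 2) (min (d 0 3 + d 3 2) (d 0 4 + d 4 2)), d 0 3, d 0 4]) v,
     (![min (d 2 1 + d 1 0) (min (d 2 3 + d 3 0) (d 2 4 + d 4 0)), d 2 1, 0, d 2 3, d 2 4]) v,
     (![d 0 4, d 1 4, d 2 4, d 3 4, 0]) v ]

lemma upper (d : Fin 5 → Fin 5 → ℝ) (hd : IsDistFn W4 d) :
    ∃ q : Fin 5 → Fin 3 → ℝ, ∀ i j, W4.Adj i j → ‖q i - q j‖ = d i j := by
  obtain ⟨sy, nn, tri⟩ := hd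
  have a01 : W4.Adj 0 1 := by simp [W4, Sym2.eq_iff]
  have a12 : W4.Adj 1 2 := by simp [W4, Sym2.eq_iff]
  have a23 : W4.Adj 2 3 := by simp [W4, Sym2.eq_iff]
  have a30 : W4.Adj 3 0 := by simp [W4, Sym2.eq_iff]
  have a04 : W4.Adj 0 4 := by simp [W4, Sym2.eq_iff]
  have a14 : W4.Adj 1 4 := by simp [W4, Sym2.eq_iff]
  have a24 : W4.Adj 2 4 := by simp [W4, Sym2.eq_iff]
  have a34 : W4.Adj 3 4 := by simp [W4, Sym2.eq_iff]
  have tri3 : ∀ x y z : Fin 5, W4.Adj x y → W4.Adj y z → W4.Adj x z →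
      d x z ≤ d x y + d y z := by
    intro x y z h1 h2 h3
    simpa using tri x z h3 (SimpleGraph.Walk.cons h1 (SimpleGraph.Walk.cons h2 SimpleGraph.Walk.nil))
  have tri4 : ∀ x y z w : Fin 5, W4.Adj x y → W4.Adj y z → W4.Adj z w → W4.Adj x w →
      d x w ≤ d x y + d y z + d z w := by
    intro x y z w h1 h2 h3 h4
    have := tri x w h4 (SimpleGraph.Walk.cons h1 (SimpleGraph.Walk.cons h2
      (SimpleGraph.Walk.cons h3 SimpleGraph.Walk.nil)))
    simp at this; linarith
  have p01 := nn 0 1 a01; have p12 := nn 1 2 a12; have p23 := nn 2 3 a23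
  have p30 := nn 3 0 a30; have p04 := nn 0 4 a04; have p14 := nn 1 4 a14
  have p24 := nn 2 4 a24; have p34 := nn 3 4 a34
  have t1 : d 2 1 ≤ d 2 3 + d 3 0 + d 0 1 := tri4 2 3 0 1 a23 a30 a01 a12.symm
  have t2 : d 2 1 ≤ d 2 4 + d 4 0 + d 0 1 := tri4 2 4 0 1 a24 a04.symm a01 a12.symm
  have t3 : d 0 1 ≤ d 0 3 + d 3 2 + d 2 1 := tri4 0 3 2 1 a30.symm a23.symm a12.symm a01
  have t4 : d 0 1 ≤ d 0 4 + d 4 2 + d 2 1 := tri4 0 4 2 1 a04 a24.symm a12.symm a01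
  have t5 : d 0 3 ≤ d 0 1 + d 1 2 + d 2 3 := tri4 0 1 2 3 a01 a12 a23 a30.symm
  have t6 : d 0 3 ≤ d 0 4 + d 4 2 + d 2 3 := tri4 0 4 2 3 a04 a24.symm a23 a30.symm
  have t7 : d 2 3 ≤ d 2 1 + d 1 0 + d 0 3 := tri4 2 1 0 3 a12.symm a01.symm a30.symm a23
  have t8 : d 2 3 ≤ d 2 4 + d 4 0 + d 0 3 := tri4 2 4 0 3 a24 a04.symm a30.symm a23
  have t9 : d 2 4 ≤ d 2 1 + d 1 0 + d 0 4 := tri4 2 1 0 4 a12.symm a01.symm a04 a24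
  have t10 : d 2 4 ≤ d 2 3 + d 3 0 + d 0 4 := tri4 2 3 0 4 a23 a30 a04 a24
  have t11 : d 0 4 ≤ d 0 1 + d 1 2 + d 2 4 := tri4 0 1 2 4 a01 a12 a24 a04
  have t12 : d 0 4 ≤ d 0 3 + d 3 2 + d 2 4 := tri4 0 3 2 4 a30.symm a23.symm a24 a04
  have s1 : d 0 4 ≤ d 0 1 + d 1 4 := tri3 0 1 4 a01 a14 a04
  have s2 : d 1 4 ≤ d 1 0 + d 0 4 := tri3 1 0 4 a01.symm a04 a14
  have s3 : d 1 4 ≤ d 1 2 + d 2 4 := tri3 1 2 4 a12 a24 a14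
  have s4 : d 2 4 ≤ d 2 1 + d 1 4 := tri3 2 1 4 a12.symm a14 a24
  have s5 : d 2 4 ≤ d 2 3 + d 3 4 := tri3 2 3 4 a23 a34 a24
  have s6 : d 3 4 ≤ d 3 2 + d 2 4 := tri3 3 2 4 a23.symm a24 a34
  have s7 : d 3 4 ≤ d 3 0 + d 0 4 := tri3 3 0 4 a30 a04 a34
  have s8 : d 0 4 ≤ d 0 3 + d 3 4 := tri3 0 3 4 a30.symm a34 a04
  have s9 : d 0 1 ≤ d 0 4 + d 4 1 := tri3 0 4 1 a04 a14.symm a01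
  have s10 : d 2 1 ≤ d 2 4 + d 4 1 := tri3 2 4 1 a24 a14.symm a12.symm
  have s11 : d 0 3 ≤ d 0 4 + d 4 3 := tri3 0 4 3 a04 a34.symm a30.symm
  have s12 : d 2 3 ≤ d 2 4 + d 4 3 := tri3 2 4 3 a24 a34.symm a23
  set T2 := min (d 0 1 + d 1 2) (min (d 0 3 + d 3 2) (d 0 4 + d 4 2)) with hT2
  set T0 := min (d 2 1 + d 1 0) (min (d 2 3 + d 3 0) (d 2 4 + d 4 0)) with hT0
  have hT2a : T2 ≤ d 0 1 + d 1 2 := min_le_left _ _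
  have hT2b : T2 ≤ d 0 3 + d 3 2 := le_trans (min_le_right _ _) (min_le_left _ _)
  have hT2c : T2 ≤ d 0 4 + d 4 2 := le_trans (min_le_right _ _) (min_le_right _ _)
  have hT0a : T0 ≤ d 2 1 + d 1 0 := min_le_left _ _
  have hT0b : T0 ≤ d 2 3 + d 3 0 := le_trans (min_le_right _ _) (min_le_left _ _)
  have hT0c : T0 ≤ d 2 4 + d 4 0 := le_trans (min_le_right _ _) (min_le_right _ _)
  have L01 : d 2 1 - d 0 1 ≤ T0 :=
    le_min (by linarith [sy 0 1]) (le_min (by linarith) (by linarith))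
  have L12 : d 0 1 - d 1 2 ≤ T2 :=
    le_min (by linarith) (le_min (by linarith [sy 2 1]) (by linarith [sy 2 1]))
  have L23 : d 0 3 - d 2 3 ≤ T2 :=
    le_min (by linarith) (le_min (by linarith [sy 2 3]) (by linarith))
  have L30 : d 2 3 - d 3 0 ≤ T0 :=
    le_min (by linarith [sy 0 3]) (le_min (by linarith) (by linarith [sy 0 3]))
  have L04 : d 2 4 - d 0 4 ≤ T0 :=
    le_min (by linarith) (le_min (by linarith) (by linarith [sy 0 4]))
  have L24 : d 0 4 - d 2 4 ≤ T2 :=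
    le_min (by linarith) (le_min (by linarith) (by linarith [sy 4 2]))
  have cmp : ∀ i j : Fin 5, ∀ k : Fin 3, (qfun d i - qfun d j) k = qfun d i k - qfun d j k :=
    fun _ _ _ => rfl
  have A0 : qfun d 0 0 = 0 := by norm_num [qfun]
  have A1 : qfun d 1 0 = d 0 1 := by norm_num [qfun]
  have A2 : qfun d 2 0 = T2 := by rw [hT2]; norm_num [qfun]; rfl
  have A3 : qfun d 3 0 = d 0 3 := by norm_num [qfun]; rfl
  have A4 : qfun d 4 0 = d 0 4 := by norm_num [qfun]; rfl
  have B0 : qfun d 0 1 = T0 := by rw [hT0]; norm_num [qfun]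
  have B1 : qfun d 1 1 = d 2 1 := by norm_num [qfun]
  have B2 : qfun d 2 1 = 0 := by norm_num [qfun]; rfl
  have B3 : qfun d 3 1 = d 2 3 := by norm_num [qfun]; rfl
  have B4 : qfun d 4 1 = d 2 4 := by norm_num [qfun]; rfl
  have C0 : qfun d 0 2 = d 0 4 := by norm_num [qfun]; rfl
  have C1 : qfun d 1 2 = d 1 4 := by norm_num [qfun]; rfl
  have C2 : qfun d 2 2 = d 2 4 := by norm_num [qfun]; rfl
  have C3 : qfun d 3 2 = d 3 4 := by norm_num [qfun]; rfl
  have C4 : qfun d 4 2 = 0 := by norm_num [qfun]; rfl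
  have E01 : ‖qfun d 0 - qfun d 1‖ = d 0 1 := by
    refine pinorm_eq _ _ p01 ?_ 0 ?_
    · intro k; fin_cases k
      · show |qfun d 0 0 - qfun d 1 0| ≤ d 0 1
        rw [A0, A1, abs_le]; constructor <;> linarith [p01]
      · show |qfun d 0 1 - qfun d 1 1| ≤ d 0 1
        rw [B0, B1, abs_le]; constructor <;> linarith [sy 0 1, L01, hT0a]
      · show |qfun d 0 2 - qfun d 1 2| ≤ d 0 1
        rw [C0, C1, abs_le]; constructor <;> linarith [sy 0 1, s1, s2]
    · show |qfun d 0 0 - qfun d 1 0| = d 0 1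
      rw [A0, A1, zero_sub, abs_neg, abs_of_nonneg p01]
  have E12 : ‖qfun d 1 - qfun d 2‖ = d 1 2 := by
    refine pinorm_eq _ _ p12 ?_ 1 ?_
    · intro k; fin_cases k
      · show |qfun d 1 0 - qfun d 2 0| ≤ d 1 2
        rw [A1, A2, abs_le]; constructor <;> linarith [L12, hT2a]
      · show |qfun d 1 1 - qfun d 2 1| ≤ d 1 2
        rw [B1, B2, abs_le]; constructor <;> linarith [sy 1 2, p12]
      · show |qfun d 1 2 - qfun d 2 2| ≤ d 1 2
        rw [C1, C2, abs_le]; constructor <;> linarith [sy 2 1, s3, s4]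
    · show |qfun d 1 1 - qfun d 2 1| = d 1 2
      rw [B1, B2, sub_zero, abs_of_nonneg (by linarith [sy 1 2, p12]), ← sy 1 2]
  have E23 : ‖qfun d 2 - qfun d 3‖ = d 2 3 := by
    refine pinorm_eq _ _ p23 ?_ 1 ?_
    · intro k; fin_cases k
      · show |qfun d 2 0 - qfun d 3 0| ≤ d 2 3
        rw [A2, A3, abs_le]; constructor <;> linarith [sy 2 3, L23, hT2b]
      · show |qfun d 2 1 - qfun d 3 1| ≤ d 2 3
        rw [B2, B3, abs_le]; constructor <;> linarith [p23]
      · show |qfun d 2 2 - qfun d 3 2| ≤ d 2 3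
        rw [C2, C3, abs_le]; constructor <;> linarith [sy 2 3, s5, s6]
    · show |qfun d 2 1 - qfun d 3 1| = d 2 3
      rw [B2, B3, zero_sub, abs_neg, abs_of_nonneg p23]
  have E30 : ‖qfun d 3 - qfun d 0‖ = d 3 0 := by
    refine pinorm_eq _ _ p30 ?_ 0 ?_
    · intro k; fin_cases k
      · show |qfun d 3 0 - qfun d 0 0| ≤ d 3 0
        rw [A3, A0, abs_le]; constructor <;> linarith [sy 0 3, p30]
      · show |qfun d 3 1 - qfun d 0 1| ≤ d 3 0
        rw [B3, B0, abs_le]; constructor <;> linarith [sy 0 3, L30, hT0b]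
      · show |qfun d 3 2 - qfun d 0 2| ≤ d 3 0
        rw [C3, C0, abs_le]; constructor <;> linarith [sy 0 3, s7, s8]
    · show |qfun d 3 0 - qfun d 0 0| = d 3 0
      rw [A3, A0, sub_zero, abs_of_nonneg (by linarith [sy 0 3, p30]), sy 0 3]
  have E04 : ‖qfun d 0 - qfun d 4‖ = d 0 4 := by
    refine pinorm_eq _ _ p04 ?_ 2 ?_
    · intro k; fin_cases k
      · show |qfun d 0 0 - qfun d 4 0| ≤ d 0 4
        rw [A0, A4, abs_le]; constructor <;> linarith [p04]
      · show |qfun d 0 1 - qfun d 4 1| ≤ d 0 4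
        rw [B0, B4, abs_le]; constructor <;> linarith [sy 0 4, L04, hT0c]
      · show |qfun d 0 2 - qfun d 4 2| ≤ d 0 4
        rw [C0, C4, abs_le]; constructor <;> linarith [p04]
    · show |qfun d 0 2 - qfun d 4 2| = d 0 4
      rw [C0, C4, sub_zero, abs_of_nonneg p04]
  have E14 : ‖qfun d 1 - qfun d 4‖ = d 1 4 := by
    refine pinorm_eq _ _ p14 ?_ 2 ?_
    · intro k; fin_cases k
      · show |qfun d 1 0 - qfun d 4 0| ≤ d 1 4
        rw [A1, A4, abs_le]; constructor <;> linarith [sy 1 4, s1, s9]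
      · show |qfun d 1 1 - qfun d 4 1| ≤ d 1 4
        rw [B1, B4, abs_le]; constructor <;> linarith [sy 1 4, s4, s10]
      · show |qfun d 1 2 - qfun d 4 2| ≤ d 1 4
        rw [C1, C4, abs_le]; constructor <;> linarith [p14]
    · show |qfun d 1 2 - qfun d 4 2| = d 1 4
      rw [C1, C4, sub_zero, abs_of_nonneg p14]
  have E24 : ‖qfun d 2 - qfun d 4‖ = d 2 4 := by
    refine pinorm_eq _ _ p24 ?_ 2 ?_
    · intro k; fin_cases k
      · show |qfun d 2 0 - qfun d 4 0| ≤ d 2 4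
        rw [A2, A4, abs_le]; constructor <;> linarith [sy 4 2, L24, hT2c]
      · show |qfun d 2 1 - qfun d 4 1| ≤ d 2 4
        rw [B2, B4, abs_le]; constructor <;> linarith [p24]
      · show |qfun d 2 2 - qfun d 4 2| ≤ d 2 4
        rw [C2, C4, abs_le]; constructor <;> linarith [p24]
    · show |qfun d 2 2 - qfun d 4 2| = d 2 4
      rw [C2, C4, sub_zero, abs_of_nonneg p24]
  have E34 : ‖qfun d 3 - qfun d 4‖ = d 3 4 := by
    refine pinorm_eq _ _ p34 ?_ 2 ?_
    · intro k; fin_cases k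
      · show |qfun d 3 0 - qfun d 4 0| ≤ d 3 4
        rw [A3, A4, abs_le]; constructor <;> linarith [sy 3 4, s8, s11]
      · show |qfun d 3 1 - qfun d 4 1| ≤ d 3 4
        rw [B3, B4, abs_le]; constructor <;> linarith [sy 3 4, s5, s12]
      · show |qfun d 3 2 - qfun d 4 2| ≤ d 3 4
        rw [C3, C4, abs_le]; constructor <;> linarith [p34]
    · show |qfun d 3 2 - qfun d 4 2| = d 3 4
      rw [C3, C4, sub_zero, abs_of_nonneg p34]
  refine ⟨qfun d, ?_⟩
  intro i j hij
  rw [W4, SimpleGraph.fromEdgeSet_adj] at hij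
  obtain ⟨hm, hne⟩ := hij
  simp only [Set.mem_insert_iff, Set.mem_singleton_iff, Sym2.eq_iff] at hm
  have E10 : ‖qfun d 1 - qfun d 0‖ = d 1 0 := by rw [norm_sub_rev, ← sy 0 1]; exact E01
  have E21 : ‖qfun d 2 - qfun d 1‖ = d 2 1 := by rw [norm_sub_rev, ← sy 1 2]; exact E12
  have E32 : ‖qfun d 3 - qfun d 2‖ = d 3 2 := by rw [norm_sub_rev, ← sy 2 3]; exact E23
  have E03 : ‖qfun d 0 - qfun d 3‖ = d 0 3 := by rw [norm_sub_rev, ← sy 3 0]; exact E30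
  have E40 : ‖qfun d 4 - qfun d 0‖ = d 4 0 := by rw [norm_sub_rev, ← sy 0 4]; exact E04
  have E41 : ‖qfun d 4 - qfun d 1‖ = d 4 1 := by rw [norm_sub_rev, ← sy 1 4]; exact E14
  have E42 : ‖qfun d 4 - qfun d 2‖ = d 4 2 := by rw [norm_sub_rev, ← sy 2 4]; exact E24
  have E43 : ‖qfun d 4 - qfun d 3‖ = d 4 3 := by rw [norm_sub_rev, ← sy 3 4]; exact E34
  rcases hm with (⟨rfl,rfl⟩|⟨rfl,rfl⟩)|(⟨rfl,rfl⟩|⟨rfl,rfl⟩)|(⟨rfl,rfl⟩|⟨rfl,rfl⟩)|(⟨rfl,rfl⟩|⟨rfl,rfl⟩)|(⟨rfl,rfl⟩|⟨rfl,rfl⟩)|(⟨rfl,rfl⟩|⟨rfl,rfl⟩)|(⟨rfl,rfl⟩|⟨rfl,rfl⟩)|(⟨rfl,rfl⟩|⟨rfl,rfl⟩)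
  exacts [E01, E10, E12, E21, E23, E32, E30, E03, E04, E40, E14, E41, E24, E42, E34, E43]

/-- `f_∞(W_4) = 3`: every distance function on `W_4` is realizable in
`ℓ_∞³`, but some distance function is not realizable in `ℓ_∞²`. -/
theorem finfty_W4 :
    finfty W4 = 3 ∧
    (∀ d : Fin 5 → Fin 5 → ℝ, IsDistFn W4 d →
      ∃ q : Fin 5 → Fin 3 → ℝ, ∀ i j, W4.Adj i j → ‖q i - q j‖ = d i j) ∧
    ¬ (∀ d : Fin 5 → Fin 5 → ℝ, IsDistFn W4 d →
      ∃ q : Fin 5 → Fin 2 → ℝ, ∀ i j, W4.Adj i j → ‖q i - q j‖ = d i j) := by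
  have a01 : W4.Adj 0 1 := by simp [W4, Sym2.eq_iff]
  have a12 : W4.Adj 1 2 := by simp [W4, Sym2.eq_iff]
  have a23 : W4.Adj 2 3 := by simp [W4, Sym2.eq_iff]
  have a30 : W4.Adj 3 0 := by simp [W4, Sym2.eq_iff]
  have a04 : W4.Adj 0 4 := by simp [W4, Sym2.eq_iff]
  have a14 : W4.Adj 1 4 := by simp [W4, Sym2.eq_iff]
  have a24 : W4.Adj 2 4 := by simp [W4, Sym2.eq_iff]
  have a34 : W4.Adj 3 4 := by simp [W4, Sym2.eq_iff]
  have dv01 : dC 0 1 = 18 := by norm_num [dC, Dmat]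
  have dv12 : dC 1 2 = 17 := by norm_num [dC, Dmat]; rfl
  have dv23 : dC 2 3 = 20 := by norm_num [dC, Dmat]; rfl
  have dv30 : dC 3 0 = 24 := by norm_num [dC, Dmat]; rfl
  have dv04 : dC 0 4 = 200 := by norm_num [dC, Dmat]; rfl
  have dv14 : dC 1 4 = 200 := by norm_num [dC, Dmat]; rfl
  have dv24 : dC 2 4 = 200 := by norm_num [dC, Dmat]; rfl
  have dv34 : dC 3 4 = 200 := by norm_num [dC, Dmat]; rfl
  have not2 : ¬ (∀ d : Fin 5 → Fin 5 → ℝ, IsDistFn W4 d →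
      ∃ q : Fin 5 → Fin 2 → ℝ, ∀ i j, W4.Adj i j → ‖q i - q j‖ = d i j) := by
    intro hcon
    obtain ⟨q, hq⟩ := hcon dC dC_distfn
    exact refute q (by rw [hq 0 1 a01]; exact dv01) (by rw [hq 1 2 a12]; exact dv12)
      (by rw [hq 2 3 a23]; exact dv23) (by rw [hq 3 0 a30]; exact dv30)
      (by rw [hq 0 4 a04]; exact dv04) (by rw [hq 1 4 a14]; exact dv14)
      (by rw [hq 2 4 a24]; exact dv24) (by rw [hq 3 4 a34]; exact dv34)
  refine ⟨?_, upper, not2⟩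
  have hmem3 : (3:ℕ) ∈ {k : ℕ | ∀ d : Fin 5 → Fin 5 → ℝ, IsDistFn W4 d →
      ∃ q : Fin 5 → Fin k → ℝ, ∀ x y, W4.Adj x y → ‖q x - q y‖ = d x y} := upper
  unfold finfty
  refine le_antisymm (Nat.sInf_le hmem3) (le_csInf ⟨3, hmem3⟩ ?_)
  intro k hk
  by_contra hlt
  push_neg at hlt
  have hk2 : k ≤ 2 := by omega
  obtain ⟨q, hq⟩ := hk dC dC_distfn
  interval_cases k
  · have h0 : q 0 - q 1 = 0 := funext fun i => i.elim0
    have h1 := hq 0 1 a01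
    rw [h0, norm_zero, dv01] at h1
    norm_num at h1
  · set q2 : Fin 5 → Fin 2 → ℝ := fun v => ![q v 0, 0] with hq2
    have key : ∀ x y : Fin 5, ‖q2 x - q2 y‖ = ‖q x - q y‖ := by
      intro x y
      rw [pinorm2, pinorm1]
      have c0 : (q2 x - q2 y) 0 = q x 0 - q y 0 := by simp [hq2]
      have c1 : (q2 x - q2 y) 1 = 0 := by simp [hq2]
      rw [c0, c1, abs_zero, max_eq_left (abs_nonneg _)]
      rfl
    exact refute q2 (by rw [key, hq 0 1 a01]; exact dv01) (by rw [key, hq 1 2 a12]; exact dv12)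
      (by rw [key, hq 2 3 a23]; exact dv23) (by rw [key, hq 3 0 a30]; exact dv30)
      (by rw [key, hq 0 4 a04]; exact dv04) (by rw [key, hq 1 4 a14]; exact dv14)
      (by rw [key, hq 2 4 a24]; exact dv24) (by rw [key, hq 3 4 a34]; exact dv34)
  · exact refute q (by rw [hq 0 1 a01]; exact dv01) (by rw [hq 1 2 a12]; exact dv12)
      (by rw [hq 2 3 a23]; exact dv23) (by rw [hq 3 0 a30]; exact dv30)
      (by rw [hq 0 4 a04]; exact dv04) (by rw [hq 1 4 a14]; exact dv14)
      (by rw [hq 2 4 a24]; exact dv24) (by rw [hq 3 4 a34]; exact dv34)
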